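/- arXiv:2006.10444 — 6 statements merged into one kernel-verified Lean document; each statement's English description precedes it below -/
import Mathlib

section
/- Let G be a K_{a,b}-free graph and let I be an independent set in G of size k. Suppose that for every subset D ⊆ I with |D| = a, the set of vertices of V(G)∖I whose neighborhood in I contains D induces a subgraph with no independent set of size b. Then, additionally assuming every vertex outside I with fewer than a neighbors in I is covered so that for each C ⊆ I with 1 ≤ |C| ≤ a−1 the subgraph induced by {v ∉ I : N(v)∩I = C} ∪ C has no independent set of size |C|+1, the independence number of G satisfies α(G) ≤ (a−1)·(e·k)^{a−1} + (b−1)·k^a. -/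
/-- Local-search bound for `K_{a,b}`-free graphs: if `I` is a maximal independent set of size
`k` such that no local improvement is possible (neither via the sets `V_C ∪ C` for small
`C ⊆ I`, nor via the sets of vertices whose neighborhood in `I` contains a fixed `a`-subset
`D`), then `α(G) ≤ (a−1)·(e·k)^(a−1) + (b−1)·k^a`. -/
theorem kab_free_alpha_bound {V : Type*} [Fintype V] [DecidableEq V]
    (G : SimpleGraph V) [DecidableRel G.Adj] (a b : ℕ) (ha : 2 ≤ a) (hb : 1 ≤ b)
    (hfree : IsEmpty (completeBipartiteGraph (Fin a) (Fin b) ↪g G))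
    (I : Finset V) (k : ℕ)
    (hI : (I : Set V).Pairwise fun u v => ¬G.Adj u v) (hk : I.card = k)
    (hmax : ∀ v ∉ I, ∃ u ∈ I, G.Adj v u)
    (hD : ∀ D ⊆ I, D.card = a →
      ∀ s : Finset V, (∀ v ∈ s, v ∉ I ∧ D ⊆ G.neighborFinset v) →
        ((s : Set V).Pairwise fun u v => ¬G.Adj u v) → s.card ≠ b)
    (hC : ∀ C ⊆ I, 1 ≤ C.card → C.card ≤ a - 1 →
      ∀ s : Finset V,
        (∀ v ∈ s, (v ∉ I ∧ G.neighborFinset v ∩ I = C) ∨ v ∈ C) →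
        ((s : Set V).Pairwise fun u v => ¬G.Adj u v) → s.card ≠ C.card + 1) :
    ∀ s : Finset V, ((s : Set V).Pairwise fun u v => ¬G.Adj u v) →
      (s.card : ℝ) ≤ ((a : ℝ) - 1) * (Real.exp 1 * k) ^ (a - 1) + ((b : ℝ) - 1) * (k : ℝ) ^ a := by
  classical
  intro s hs
  rcases Nat.eq_zero_or_pos k with hk0 | hkpos
  · -- k = 0 : V is empty
    subst hk0
    have hIe : I = ∅ := Finset.card_eq_zero.mp hk
    have hse : s = ∅ := by
      by_contra h
      obtain ⟨v, hv⟩ := Finset.nonempty_iff_ne_empty.mpr h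
      obtain ⟨u, hu, _⟩ := hmax v (by simp [hIe])
      simp [hIe] at hu
    have h1 : a - 1 ≠ 0 := by omega
    simp [hse, zero_pow h1, zero_pow (by omega : a ≠ 0)]
  -- main case
  set N : V → Finset V := fun v => G.neighborFinset v ∩ I with hNdef
  have hchoice : ∀ v : V, ∃ D : Finset V, D ⊆ N v ∧ (a ≤ (N v).card → D.card = a) ∧
      ((N v).card < a → D = N v) := by
    intro v
    by_cases h : a ≤ (N v).card
    · obtain ⟨D, h1, h2⟩ := Finset.exists_subset_card_eq (s := N v) (n := a) h
      exact ⟨D, h1, fun _ => h2, fun h' => absurd h (not_le.mpr h')⟩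
    · exact ⟨N v, subset_rfl, fun h' => absurd h' h, fun _ => rfl⟩
  choose Dv hDv1 hDv2 hDv3 using hchoice
  set f : V → Finset V := fun v => if v ∈ I then {v} else Dv v with hfdef
  set T : Finset (Finset V) := I.powerset.filter (fun C => 1 ≤ C.card ∧ C.card ≤ a) with hTdef
  have hNsub : ∀ v, N v ⊆ I := fun v => Finset.inter_subset_right
  have hmap : ∀ v ∈ s, f v ∈ T := by
    intro v hv
    by_cases hvI : v ∈ I
    · simp only [hfdef, if_pos hvI, hTdef, Finset.mem_filter, Finset.mem_powerset]
      refine ⟨Finset.singleton_subset_iff.mpr hvI, ?_, ?_⟩ <;> simp <;> omega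
    · simp only [hfdef, if_neg hvI, hTdef, Finset.mem_filter, Finset.mem_powerset]
      have hsub : Dv v ⊆ I := (hDv1 v).trans (hNsub v)
      have hne : (N v).Nonempty := by
        obtain ⟨u, hu, hadj⟩ := hmax v hvI
        exact ⟨u, by simp [hNdef, hu, hadj]⟩
      refine ⟨hsub, ?_, ?_⟩
      · by_cases h : a ≤ (N v).card
        · rw [hDv2 v h]; omega
        · rw [hDv3 v (not_le.mp h)]; exact Finset.card_pos.mpr hne
      · by_cases h : a ≤ (N v).card
        · rw [hDv2 v h]
        · rw [hDv3 v (not_le.mp h)]; omega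
  have hsum : s.card = ∑ C ∈ T, (s.filter fun v => f v = C).card :=
    Finset.card_eq_sum_card_fiberwise hmap
  -- bound each fiber
  have hfiber : ∀ C ∈ T, (s.filter fun v => f v = C).card ≤
      if C.card = a then b - 1 else a - 1 := by
    intro C hCT
    simp only [hTdef, Finset.mem_filter, Finset.mem_powerset] at hCT
    obtain ⟨hCI, hC1, hCa⟩ := hCT
    set fib := s.filter fun v => f v = C with hfib
    have hfibs : fib ⊆ s := Finset.filter_subset _ _
    have hfibind : ∀ t ⊆ fib, ((t : Set V).Pairwise fun u v => ¬G.Adj u v) := by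
      intro t ht
      exact hs.mono (by exact_mod_cast ht.trans hfibs)
    by_cases hcc : C.card = a
    · rw [if_pos hcc]
      by_contra h
      push_neg at h
      obtain ⟨t, hts, htc⟩ := Finset.exists_subset_card_eq (s := fib) (n := b) (by omega)
      refine hD C hCI hcc t ?_ (hfibind t hts) htc
      intro v hv
      have hvfib := hts hv
      simp only [hfib, Finset.mem_filter] at hvfib
      obtain ⟨hvs, hfv⟩ := hvfib
      by_cases hvI : v ∈ I
      · exfalso
        rw [hfdef] at hfv
        simp only [if_pos hvI] at hfv
        rw [← hfv] at hcc
        simp at hcc; omega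
      · refine ⟨hvI, ?_⟩
        rw [hfdef] at hfv
        simp only [if_neg hvI] at hfv
        rw [← hfv]
        exact (hDv1 v).trans Finset.inter_subset_left
    · rw [if_neg hcc]
      have hCa1 : C.card ≤ a - 1 := by omega
      have hkey : fib.card ≤ C.card := by
        by_contra h
        push_neg at h
        obtain ⟨t, hts, htc⟩ := Finset.exists_subset_card_eq (s := fib) (n := C.card + 1) (by omega)
        refine hC C hCI hC1 hCa1 t ?_ (hfibind t hts) htc
        intro v hv
        have hvfib := hts hv
        simp only [hfib, Finset.mem_filter] at hvfib
        obtain ⟨hvs, hfv⟩ := hvfib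
        by_cases hvI : v ∈ I
        · right
          rw [hfdef] at hfv
          simp only [if_pos hvI] at hfv
          rw [← hfv]; simp
        · left
          refine ⟨hvI, ?_⟩
          rw [hfdef] at hfv
          simp only [if_neg hvI] at hfv
          by_cases hbig : a ≤ (N v).card
          · exfalso
            have := hDv2 v hbig
            rw [hfv] at this
            omega
          · have := hDv3 v (not_le.mp hbig)
            rw [this] at hfv
            exact hfv
      omega
  -- split T
  set T2 := T.filter (fun C => C.card = a) with hT2
  set T1 := T.filter (fun C => ¬ C.card = a) with hT1
  have hsplit : s.card ≤ (a - 1) * T1.card + (b - 1) * T2.card := by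
    rw [hsum]
    calc ∑ C ∈ T, (s.filter fun v => f v = C).card
        ≤ ∑ C ∈ T, (if C.card = a then b - 1 else a - 1) := Finset.sum_le_sum hfiber
      _ = ∑ C ∈ T2, (b-1) + ∑ C ∈ T1, (a-1) := by
          rw [← Finset.sum_filter_add_sum_filter_not T (fun C => C.card = a)]
          congr 1
          · exact Finset.sum_congr rfl (fun C hCm => by
              simp only [hT2, Finset.mem_filter] at hCm; rw [if_pos hCm.2])
          · exact Finset.sum_congr rfl (fun C hCm => by
              simp only [hT1, Finset.mem_filter] at hCm; rw [if_neg hCm.2])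
      _ = (b - 1) * T2.card + (a - 1) * T1.card := by
          simp [Finset.sum_const, mul_comm]
      _ = (a - 1) * T1.card + (b - 1) * T2.card := by ring
  -- count T2
  have hT2card : T2.card ≤ k ^ a := by
    have hsub : T2 ⊆ I.powersetCard a := by
      intro C hCm
      simp only [hT2, hTdef, Finset.mem_filter, Finset.mem_powerset] at hCm
      rw [Finset.mem_powersetCard]
      exact ⟨hCm.1.1, hCm.2⟩
    calc T2.card ≤ (I.powersetCard a).card := Finset.card_le_card hsub
      _ = k.choose a := by rw [Finset.card_powersetCard, hk]
      _ ≤ k ^ a := Nat.choose_le_pow k a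
  -- count T1
  have hT1card : T1.card ≤ (a - 1) * k ^ (a - 1) := by
    have hsub : T1 ⊆ (Finset.Icc 1 (a-1)).biUnion (fun j => I.powersetCard j) := by
      intro C hCm
      simp only [hT1, hTdef, Finset.mem_filter, Finset.mem_powerset] at hCm
      rw [Finset.mem_biUnion]
      exact ⟨C.card, by rw [Finset.mem_Icc]; omega,
        Finset.mem_powersetCard.mpr ⟨hCm.1.1, rfl⟩⟩
    calc T1.card ≤ ((Finset.Icc 1 (a-1)).biUnion (fun j => I.powersetCard j)).card :=
          Finset.card_le_card hsub
      _ ≤ ∑ j ∈ Finset.Icc 1 (a-1), (I.powersetCard j).card := Finset.card_biUnion_le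
      _ ≤ ∑ j ∈ Finset.Icc 1 (a-1), k ^ (a-1) := by
          refine Finset.sum_le_sum (fun j hj => ?_)
          rw [Finset.mem_Icc] at hj
          calc (I.powersetCard j).card = k.choose j := by rw [Finset.card_powersetCard, hk]
            _ ≤ k ^ j := Nat.choose_le_pow k j
            _ ≤ k ^ (a-1) := Nat.pow_le_pow_right hkpos hj.2
      _ = (a - 1) * k ^ (a - 1) := by
          rw [Finset.sum_const, Nat.card_Icc]
          simp [Nat.smul_one_eq_cast]
  -- combine, in ℝ
  have hnat : s.card ≤ (a - 1) * ((a-1) * k ^ (a-1)) + (b - 1) * k ^ a := by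
    calc s.card ≤ (a - 1) * T1.card + (b - 1) * T2.card := hsplit
      _ ≤ (a - 1) * ((a-1) * k ^ (a-1)) + (b - 1) * k ^ a := by
          exact Nat.add_le_add (Nat.mul_le_mul_left _ hT1card) (Nat.mul_le_mul_left _ hT2card)
  have hR : (s.card : ℝ) ≤ ((a:ℝ) - 1) * (((a:ℝ)-1) * (k:ℝ) ^ (a-1)) + ((b:ℝ) - 1) * (k:ℝ) ^ a := by
    have := (Nat.cast_le (α := ℝ)).mpr hnat
    push_cast at this
    rw [Nat.cast_sub (by omega : 1 ≤ a), Nat.cast_sub hb] at this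
    push_cast at this
    exact this
  refine hR.trans ?_
  have hexp : ((a:ℝ) - 1) ≤ (Real.exp 1) ^ (a - 1) := by
    have h2 : (2:ℝ) ≤ Real.exp 1 := by
      have := Real.add_one_le_exp (1:ℝ)
      linarith
    calc ((a:ℝ) - 1) = ((a - 1 : ℕ) : ℝ) := by
          rw [Nat.cast_sub (by omega : 1 ≤ a)]; push_cast; ring
      _ ≤ ((2 ^ (a-1) : ℕ) : ℝ) := by
          exact_mod_cast (Nat.lt_two_pow_self (n := a-1)).le
      _ = (2:ℝ) ^ (a - 1) := by push_cast; ring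
      _ ≤ (Real.exp 1) ^ (a - 1) := by
          exact pow_le_pow_left₀ (by norm_num) h2 _
  have hkpow : (0:ℝ) ≤ (k:ℝ) ^ (a-1) := by positivity
  have ha1 : (0:ℝ) ≤ (a:ℝ) - 1 := by
    have : (1:ℝ) ≤ (a:ℝ) := by exact_mod_cast (by omega : 1 ≤ a)
    linarith
  have : ((a:ℝ)-1) * (k:ℝ) ^ (a-1) ≤ (Real.exp 1 * k) ^ (a-1) := by
    rw [mul_pow]
    exact mul_le_mul_of_nonneg_right hexp hkpow
  nlinarith [mul_le_mul_of_nonneg_left this ha1]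
end

section
/- Let G be a K_{a,b}-free graph, let I be an independent set in G, and let V₂ be the set of vertices outside I with at least a neighbors in I. Fix for each v ∈ V₂ a subset S(v) ⊆ N(v) ∩ I with |S(v)| = a. Then for every D ⊆ I with |D| = a, the set V_D = {v ∈ V₂ : S(v) = D} contains no independent set of G of size b. -/
/-- In a `K_{a,b}`-free graph with independent set `I`, for every `a`-subset `D ⊆ I`, the set
`V_D = {v ∈ V₂ : S v = D}` (where `V₂` is the set of vertices outside `I` with at least `a`
neighbors in `I`, and `S v` is a chosen `a`-subset of `N(v) ∩ I`) contains no independent set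
of size `b`. -/
theorem kab_free_VD_no_indep {V : Type*} [Fintype V] [DecidableEq V]
    (G : SimpleGraph V) [DecidableRel G.Adj] (a b : ℕ)
    (hfree : IsEmpty (completeBipartiteGraph (Fin a) (Fin b) ↪g G))
    (I : Finset V) (hI : (I : Set V).Pairwise fun u v => ¬G.Adj u v)
    (S : V → Finset V)
    (hS : ∀ v ∉ I, a ≤ (G.neighborFinset v ∩ I).card →
      S v ⊆ G.neighborFinset v ∩ I ∧ (S v).card = a)
    (D : Finset V) (hD : D ⊆ I) (hDcard : D.card = a) :
    ∀ s : Finset V,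
      (∀ v ∈ s, v ∉ I ∧ a ≤ (G.neighborFinset v ∩ I).card ∧ S v = D) →
      ((s : Set V).Pairwise fun u v => ¬G.Adj u v) → s.card < b := by
  intro s hs hsind
  by_contra hcard
  push_neg at hcard
  obtain ⟨t, hts, htcard⟩ := Finset.exists_subset_card_eq hcard
  -- adjacency between t and D
  have hadj : ∀ v ∈ t, ∀ d ∈ D, G.Adj v d := by
    intro v hv d hd
    obtain ⟨hvI, hvcard, hvS⟩ := hs v (hts hv)
    have := (hS v hvI hvcard).1
    rw [hvS] at this
    have := this hd
    simp only [Finset.mem_inter, SimpleGraph.mem_neighborFinset] at this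
    exact this.1
  have hdisj : ∀ v ∈ t, v ∉ D := fun v hv hvD =>
    (hs v (hts hv)).1 (hD hvD)
  -- build vertices
  let fD : Fin a → V := fun i => (D.equivFin.symm (Fin.cast hDcard.symm i) : V)
  let ft : Fin b → V := fun j => (t.equivFin.symm (Fin.cast htcard.symm j) : V)
  have hfD : ∀ i, fD i ∈ D := fun i => (D.equivFin.symm _).2
  have hft : ∀ j, ft j ∈ t := fun j => (t.equivFin.symm _).2
  have hfDinj : Function.Injective fD := by
    intro i j h
    have := Subtype.ext (p := fun x => x ∈ D) h
    simpa [Fin.ext_iff] using D.equivFin.symm.injective this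
  have hftinj : Function.Injective ft := by
    intro i j h
    have := Subtype.ext (p := fun x => x ∈ t) h
    simpa [Fin.ext_iff] using t.equivFin.symm.injective this
  refine hfree.elim ⟨⟨Sum.elim fD ft, ?_⟩, ?_⟩
  · rintro (i | i) (j | j) h <;> simp only [Sum.elim_inl, Sum.elim_inr] at h
    · exact congrArg Sum.inl (hfDinj h)
    · exact absurd (h ▸ hfD i) (hdisj _ (hft j))
    · exact absurd (h.symm ▸ hfD j) (hdisj _ (hft i))
    · exact congrArg Sum.inr (hftinj h)
  · rintro (i | i) (j | j) <;>
      simp only [Function.Embedding.coeFn_mk, DFunLike.coe, Sum.elim_inl, Sum.elim_inr,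
        completeBipartiteGraph_adj]
    · constructor
      · intro h
        by_cases hij : fD i = fD j
        · exact absurd (hij ▸ h) (G.irrefl)
        · exact absurd h (hI (hD (hfD i)) (hD (hfD j)) hij)
      · simp
    · simp [hadj _ (hft j) _ (hfD i), (hadj _ (hft j) _ (hfD i)).symm]
    · simp [hadj _ (hft i) _ (hfD j)]
    · constructor
      · intro h
        by_cases hij : ft i = ft j
        · exact absurd (hij ▸ h) (G.irrefl)
        · exact absurd h (hsind (hts (hft i)) (hts (hft j)) hij)
      · simp
end

section
/- Let J be a graph with maximum degree at most t, let G be a graph with vertex set partitioned into sets V_i indexed by vertices i of J, where every edge of G joins V_i and V_j for some edge ij of J. Construct the graph G' whose vertices are the edges of G, with two distinct edges e ∈ E_{ij} and f ∈ E_{ij'} (where ij and ij' are edges of J sharing endpoint i) adjacent in G' whenever either ij = ij', or j ≠ j' and e and f do not share a vertex of G. Then G' contains no induced star K_{1,d} for any d ≥ 2t + 2. -/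
/-- The edge-conflict graph `G'` of a colored subgraph isomorphism instance: vertices are the
edges of `G`; two distinct edges are adjacent iff they lie between the same pair of color
classes, or their class-pairs share an index and the edges are vertex-disjoint. -/
def edgeConflictGraph {V ι : Type*} (G : SimpleGraph V) (part : V → ι) :
    SimpleGraph {e : Sym2 V // e ∈ G.edgeSet} :=
  SimpleGraph.fromRel fun e f =>
    Sym2.map part e.1 = Sym2.map part f.1 ∨
      ((∃ i, i ∈ Sym2.map part e.1 ∧ i ∈ Sym2.map part f.1) ∧
        Sym2.map part e.1 ≠ Sym2.map part f.1 ∧ ∀ x ∈ e.1, ¬ x ∈ f.1)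

lemma edgeConflictGraph_aux_rep {V : Type*} (G : SimpleGraph V) (e : Sym2 V)
    (he : e ∈ G.edgeSet) : ∃ u v, G.Adj u v ∧ e = s(u, v) := by
  induction e using Sym2.ind with
  | _ u v => exact ⟨u, v, he, rfl⟩

/-- If `J` has maximum degree at most `t` and every edge of `G` joins classes `V_i`, `V_j`
with `ij ∈ E(J)`, then the edge-conflict graph `G'` contains no induced star `K_{1,d}` for
any `d ≥ 2t + 2`. -/
theorem edgeConflictGraph_star_free {V ι : Type*} [Fintype ι]
    (G : SimpleGraph V) (J : SimpleGraph ι) [DecidableRel J.Adj]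
    (t : ℕ) (hdeg : ∀ i, J.degree i ≤ t)
    (part : V → ι) (hpart : ∀ u v : V, G.Adj u v → J.Adj (part u) (part v))
    (d : ℕ) (hd : 2 * t + 2 ≤ d) :
    IsEmpty (completeBipartiteGraph Unit (Fin d) ↪g edgeConflictGraph G part) := by
  classical
  constructor
  intro φ
  obtain ⟨u, v, huv, hce⟩ := edgeConflictGraph_aux_rep G _ (φ (Sum.inl ())).2
  have key : ∀ a : ι, ∀ x y : V, J.Adj (part x) (part y) → (a = part x ∨ a = part y) →
      s(part x, part y) ∈ (J.neighborFinset a).image (fun b => s(a, b)) := by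
    intro a x y hJ h
    rcases h with rfl | rfl
    · exact Finset.mem_image_of_mem _ (by rw [SimpleGraph.mem_neighborFinset]; exact hJ)
    · rw [Sym2.eq_swap]
      exact Finset.mem_image_of_mem _ (by rw [SimpleGraph.mem_neighborFinset]; exact hJ.symm)
  set P : Finset (Sym2 ι) := insert (Sym2.map part (φ (Sum.inl ())).1)
      (((J.neighborFinset (part u)).image fun b => s(part u, b)) ∪
        ((J.neighborFinset (part v)).image fun b => s(part v, b))) with hP
  have hmem : ∀ k : Fin d, Sym2.map part (φ (Sum.inr k)).1 ∈ P := by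
    intro k
    have hadj : (edgeConflictGraph G part).Adj (φ (Sum.inl ())) (φ (Sum.inr k)) := by
      rw [φ.map_adj_iff]; simp
    simp only [edgeConflictGraph, SimpleGraph.fromRel_adj] at hadj
    obtain ⟨hne, hrel⟩ := hadj
    have hcore : Sym2.map part (φ (Sum.inr k)).1 = Sym2.map part (φ (Sum.inl ())).1 ∨
        ∃ m, m ∈ Sym2.map part (φ (Sum.inl ())).1 ∧ m ∈ Sym2.map part (φ (Sum.inr k)).1 := by
      rcases hrel with (h | h) | (h | h)
      · exact Or.inl h.symm
      · exact Or.inr h.1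
      · exact Or.inl h
      · obtain ⟨⟨m, hm1, hm2⟩, _, _⟩ := h
        exact Or.inr ⟨m, hm2, hm1⟩
    rcases hcore with h | ⟨m, hmc, hmf⟩
    · rw [h]; exact Finset.mem_insert_self _ _
    · obtain ⟨x, y, hxy, hfe⟩ := edgeConflictGraph_aux_rep G _ (φ (Sum.inr k)).2
      have hJxy : J.Adj (part x) (part y) := hpart x y hxy
      rw [hce] at hmc
      rw [hfe] at hmf ⊢
      rw [Sym2.map_pair_eq, Sym2.mem_iff] at hmc hmf
      apply Finset.mem_insert_of_mem
      rw [Finset.mem_union]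
      rcases hmc with rfl | rfl
      · exact Or.inl (key _ x y hJxy hmf)
      · exact Or.inr (key _ x y hJxy hmf)
  have hinj : Function.Injective (fun k : Fin d => Sym2.map part (φ (Sum.inr k)).1) := by
    intro k k' h
    by_contra hkk
    have hne : φ (Sum.inr k) ≠ φ (Sum.inr k') := by
      intro he
      exact hkk (Sum.inr_injective (φ.injective he))
    have hadj : (edgeConflictGraph G part).Adj (φ (Sum.inr k)) (φ (Sum.inr k')) := by
      simp only [edgeConflictGraph, SimpleGraph.fromRel_adj]
      exact ⟨hne, Or.inl (Or.inl h)⟩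
    rw [φ.map_adj_iff] at hadj
    simp at hadj
  have hcard : d ≤ P.card := by
    have := Finset.card_le_card_of_injOn (s := Finset.univ)
      (f := fun k : Fin d => Sym2.map part (φ (Sum.inr k)).1)
      (fun k _ => hmem k) (hinj.injOn)
    simpa using this
  have hPcard : P.card ≤ 2 * t + 1 := by
    calc P.card ≤ _ + 1 := Finset.card_insert_le _ _
    _ ≤ (((J.neighborFinset (part u)).image fun b => s(part u, b)).card +
          ((J.neighborFinset (part v)).image fun b => s(part v, b)).card) + 1 := by
        exact Nat.add_le_add_right (Finset.card_union_le _ _) 1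
    _ ≤ ((J.neighborFinset (part u)).card + (J.neighborFinset (part v)).card) + 1 := by
        exact Nat.add_le_add_right (Nat.add_le_add (Finset.card_image_le) (Finset.card_image_le)) 1
    _ ≤ (t + t) + 1 := by
        have h1 := hdeg (part u); have h2 := hdeg (part v)
        rw [SimpleGraph.degree] at h1 h2
        omega
    _ ≤ 2 * t + 1 := by omega
  omega
end

section
/- With G' the edge-conflict graph as above: if G' has an independent set S of size k, then there is an assignment φ with φ(i) ∈ V_i for each vertex i of J that satisfies at least k edges of J, i.e., φ(i)φ(j) ∈ E(G) for at least k edges ij ∈ E(J). -/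
/-- If the edge-conflict graph has an independent set of size `k`, then there is an
assignment `φ` with `φ i ∈ V_i` satisfying at least `k` edges of `J`. -/
theorem assignment_of_edgeConflictGraph_indep {V : Type*} {ℓ : ℕ}
    (G : SimpleGraph V) (J : SimpleGraph (Fin ℓ))
    (part : V → Fin ℓ) (hpart : ∀ u v : V, G.Adj u v → J.Adj (part u) (part v))
    (hsurj : ∀ i : Fin ℓ, ∃ v : V, part v = i)
    (S : Set {e : Sym2 V // e ∈ G.edgeSet}) (k : ℕ)
    (hS : S.Pairwise fun e f => ¬(edgeConflictGraph G part).Adj e f)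
    (hcard : S.ncard = k) :
    ∃ φ : Fin ℓ → V, (∀ i, part (φ i) = i) ∧
      k ≤ ({e | e ∈ J.edgeSet ∧ Sym2.map φ e ∈ G.edgeSet} : Set (Sym2 (Fin ℓ))).ncard := by
  classical
  -- within a single edge, vertices are determined by their color
  have single : ∀ e : Sym2 V, e ∈ G.edgeSet → ∀ x y, x ∈ e → y ∈ e → part x = part y → x = y := by
    intro e
    induction e using Sym2.ind with
    | _ u v =>
      intro he x y hx hy hp
      rw [SimpleGraph.mem_edgeSet] at he
      have hne := (hpart u v he).ne
      rcases Sym2.mem_iff.mp hx with rfl | rfl <;>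
        rcases Sym2.mem_iff.mp hy with rfl | rfl <;>
        first | rfl | (exact absurd hp hne) | (exact absurd hp.symm hne)
  have pairrep : ∀ (e : Sym2 V) (x z : V), x ∈ e → z ∈ e → part x ≠ part z →
      Sym2.map part e = s(part x, part z) := by
    intro e
    induction e using Sym2.ind with
    | _ u v =>
      intro x z hx hz hne
      rcases Sym2.mem_iff.mp hx with rfl | rfl <;>
        rcases Sym2.mem_iff.mp hz with rfl | rfl <;>
        simp_all [Sym2.map_pair_eq, Sym2.eq_swap]
  -- consistency: vertices of edges in S are determined by their color
  have key : ∀ e ∈ S, ∀ f ∈ S, ∀ x y, x ∈ e.1 → y ∈ f.1 → part x = part y → x = y := by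
    intro e he f hf x y hx hy hp
    by_cases hef : e = f
    · subst hef; exact single e.1 e.2 x y hx hy hp
    · have hnadj := hS he hf hef
      simp only [edgeConflictGraph, SimpleGraph.fromRel_adj] at hnadj
      push_neg at hnadj
      obtain ⟨⟨hclne, himp⟩, -⟩ := hnadj hef
      have hshared : ∃ i, i ∈ Sym2.map part e.1 ∧ i ∈ Sym2.map part f.1 :=
        ⟨part x, Sym2.mem_map.mpr ⟨x, hx, rfl⟩, Sym2.mem_map.mpr ⟨y, hy, hp.symm⟩⟩
      obtain ⟨z, hze, hzf⟩ := himp hshared hclne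
      have hpz : part z = part x := by
        by_contra hzx
        have h1 : Sym2.map part e.1 = s(part x, part z) :=
          pairrep e.1 x z hx hze fun h => hzx h.symm
        have h2 : Sym2.map part f.1 = s(part y, part z) :=
          pairrep f.1 y z hy hzf fun h => hzx (h.symm.trans hp.symm)
        exact hclne (by rw [h1, h2, hp])
      have hzx := single e.1 e.2 z x hze hx hpz
      have hzy := single f.1 f.2 z y hzf hy (hpz.trans hp)
      exact hzx.symm.trans hzy
  -- define the assignment
  set φ : Fin ℓ → V := fun i =>
    if h : ∃ x, (∃ e ∈ S, x ∈ e.1) ∧ part x = i then h.choose else (hsurj i).choose with hφ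
  have hφpart : ∀ i, part (φ i) = i := by
    intro i
    simp only [hφ]
    split_ifs with h
    · exact h.choose_spec.2
    · exact (hsurj i).choose_spec
  have hfix : ∀ e ∈ S, ∀ x ∈ e.1, φ (part x) = x := by
    intro e he x hx
    have h : ∃ y, (∃ e ∈ S, y ∈ e.1) ∧ part y = part x := ⟨x, ⟨e, he, hx⟩, rfl⟩
    simp only [hφ, dif_pos h]
    obtain ⟨⟨f, hf, hyf⟩, hpy⟩ := h.choose_spec
    exact key f hf e he _ x hyf hx hpy
  have aux : ∀ (s : Sym2 V), (∀ x ∈ s, φ (part x) = x) → Sym2.map φ (Sym2.map part s) = s := by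
    intro s
    induction s using Sym2.ind with
    | _ u v =>
      intro h
      rw [Sym2.map_pair_eq, Sym2.map_pair_eq, h u (by simp), h v (by simp)]
  have hmapinv : ∀ e ∈ S, Sym2.map φ (Sym2.map part e.1) = e.1 :=
    fun e he => aux e.1 (hfix e he)
  have hJedge : ∀ (s : Sym2 V), s ∈ G.edgeSet → Sym2.map part s ∈ J.edgeSet := by
    intro s
    induction s using Sym2.ind with
    | _ u v =>
      intro h
      rw [Sym2.map_pair_eq, SimpleGraph.mem_edgeSet]
      exact hpart u v (G.mem_edgeSet.mp h)
  refine ⟨φ, hφpart, ?_⟩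
  have hsub : (fun e : {e : Sym2 V // e ∈ G.edgeSet} => Sym2.map part e.1) '' S ⊆
      {e | e ∈ J.edgeSet ∧ Sym2.map φ e ∈ G.edgeSet} := by
    rintro _ ⟨e, he, rfl⟩
    exact ⟨hJedge e.1 e.2, by rw [hmapinv e he]; exact e.2⟩
  have hinj : Set.InjOn (fun e : {e : Sym2 V // e ∈ G.edgeSet} => Sym2.map part e.1) S := by
    intro e he f hf h
    exact Subtype.ext (by rw [← hmapinv e he, ← hmapinv f hf]; exact congrArg (Sym2.map φ) h)
  calc k = S.ncard := hcard.symm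
    _ = ((fun e : {e : Sym2 V // e ∈ G.edgeSet} => Sym2.map part e.1) '' S).ncard :=
        (Set.ncard_image_of_injOn hinj).symm
    _ ≤ _ := Set.ncard_le_ncard hsub (Set.toFinite _)
end

section
/- (Erdős–Gallai) A sequence of non-negative integers d₁ ≥ d₂ ≥ … ≥ d_n is the degree sequence of a simple graph on n vertices if d₁ + … + d_n is even and for every 1 ≤ k ≤ n, ∑_{i=1}^k d_i ≤ k(k−1) + ∑_{i=k+1}^n min(d_i, k). -/
set_option maxHeartbeats 1000000
open Finset

namespace EGaux

/-- the reduced sequence -/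
def red (t w : ℕ) (e : ℕ → ℕ) : ℕ → ℕ := fun i => if i = t ∨ i = w then e i - 1 else e i

variable {n t w : ℕ} {e : ℕ → ℕ}

lemma sum_red (htw : t ≠ w) (het : 1 ≤ e t) (hew : 1 ≤ e w) (k : ℕ) :
    ∑ i ∈ range k, e i =
      (∑ i ∈ range k, red t w e i) + ((if t < k then 1 else 0) + (if w < k then 1 else 0)) := by
  have h : ∀ i, e i = red t w e i + ((if i = t then 1 else 0) + (if i = w then 1 else 0)) := by
    intro i
    by_cases h1 : i = t <;> by_cases h2 : i = w <;> simp [red, h1, h2, htw, Ne.symm htw] <;> omega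
  calc ∑ i ∈ range k, e i
      = ∑ i ∈ range k, (red t w e i + ((if i = t then 1 else 0) + (if i = w then 1 else 0))) :=
        Finset.sum_congr rfl (fun i _ => h i)
    _ = _ := by
        rw [Finset.sum_add_distrib, Finset.sum_add_distrib, Finset.sum_ite_eq' (range k) t,
          Finset.sum_ite_eq' (range k) w]
        simp [Finset.mem_range]

lemma min_red_le (i k : ℕ) :
    min (e i) k ≤ min (red t w e i) k + ((if i = t then 1 else 0) + (if i = w then 1 else 0)) := by
  by_cases h1 : i = t <;> by_cases h2 : i = w <;> simp [red, h1, h2] <;> omega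

lemma sum_min_red (k : ℕ) :
    ∑ i ∈ Ico k n, min (e i) k ≤
      (∑ i ∈ Ico k n, min (red t w e i) k) +
        ((if t ∈ Ico k n then 1 else 0) + (if w ∈ Ico k n then 1 else 0)) := by
  calc ∑ i ∈ Ico k n, min (e i) k
      ≤ ∑ i ∈ Ico k n, (min (red t w e i) k + ((if i = t then 1 else 0) + (if i = w then 1 else 0))) :=
        Finset.sum_le_sum (fun i _ => min_red_le i k)
    _ = _ := by
        rw [Finset.sum_add_distrib, Finset.sum_add_distrib, Finset.sum_ite_eq' (Ico k n) t,
          Finset.sum_ite_eq' (Ico k n) w]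

/-- Claim B : strict slack in the Erdős–Gallai inequality in the hard case. -/
lemma claimB
    (hmono : ∀ i j : ℕ, i ≤ j → e j ≤ e i)
    (htw : t < w) (hwn : w < n)
    (htop : ∀ i, i ≤ t → e i = e 0)
    (hew : 1 ≤ e w)
    (hEG : ∀ k, 1 ≤ k → k ≤ n →
      ∑ i ∈ range k, e i ≤ k * (k - 1) + ∑ i ∈ Ico k n, min (e i) k)
    (k : ℕ) (hk1 : 1 ≤ k) (hkt : k ≤ t)
    (hek : k + 1 ≤ e 0) (hewk : e w ≤ k) :
    ∑ i ∈ range k, e i + 1 ≤ k * (k - 1) + ∑ i ∈ Ico k n, min (e i) k := by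
  by_contra hcon
  push_neg at hcon
  have hEGk := hEG k hk1 (by omega)
  have heq : ∑ i ∈ range k, e i = k * (k - 1) + ∑ i ∈ Ico k n, min (e i) k := by omega
  have hSL : ∑ i ∈ range k, e i = k * e 0 := by
    rw [Finset.sum_congr rfl (fun i hi => htop i (by
      have := Finset.mem_range.mp hi; omega))]
    simp [mul_comm]
  -- split the tail at t+1
  have hsplit : ∑ i ∈ Ico k n, min (e i) k =
      ∑ i ∈ Ico k (t+1), min (e i) k + ∑ i ∈ Ico (t+1) n, min (e i) k := by
    rw [Finset.sum_Ico_consecutive _ (by omega) (by omega)]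
  have hfirst0 : ∀ i ∈ Ico k (t+1), min (e i) k = k := by
    intro i hi
    have hi' := Finset.mem_Ico.mp hi
    have h2 : e i = e 0 := htop i (by omega)
    rw [h2]
    exact min_eq_right (by omega)
  have hfirst : ∑ i ∈ Ico k (t+1), min (e i) k = (t + 1 - k) * k := by
    rw [Finset.sum_congr rfl hfirst0, Finset.sum_const, Nat.card_Ico, smul_eq_mul]
  set c := ((Ico (t+1) n).filter (fun i => k + 1 ≤ e i)).card with hc
  set Ss := ∑ i ∈ (Ico (t+1) n).filter (fun i => ¬ (k + 1 ≤ e i)), e i with hSs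
  have hT2 : ∑ i ∈ Ico (t+1) n, min (e i) k = c * k + Ss := by
    rw [← Finset.sum_filter_add_sum_filter_not (Ico (t+1) n) (fun i => k + 1 ≤ e i)]
    congr 1
    · rw [Finset.sum_congr rfl (fun i hi => min_eq_right (by
        have := (Finset.mem_filter.mp hi).2; omega))]
      rw [Finset.sum_const, smul_eq_mul]
    · exact Finset.sum_congr rfl (fun i hi => min_eq_left (by
        have := (Finset.mem_filter.mp hi).2; omega))
  have hSs1 : 1 ≤ Ss := by
    have hwmem : w ∈ (Ico (t+1) n).filter (fun i => ¬ (k + 1 ≤ e i)) := by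
      simp [Finset.mem_Ico]; omega
    calc 1 ≤ e w := hew
      _ ≤ Ss := Finset.single_le_sum (fun i _ => Nat.zero_le _) hwmem
  have hT2' : ∑ i ∈ Ico (t+1) n, min (e i) (t+1) ≤ c * (t+1) + Ss := by
    rw [← Finset.sum_filter_add_sum_filter_not (Ico (t+1) n) (fun i => k + 1 ≤ e i)]
    have hA : ∑ i ∈ (Ico (t+1) n).filter (fun i => k + 1 ≤ e i), min (e i) (t+1)
        ≤ c * (t+1) := by
      calc ∑ i ∈ (Ico (t+1) n).filter (fun i => k + 1 ≤ e i), min (e i) (t+1)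
          ≤ ∑ _i ∈ (Ico (t+1) n).filter (fun i => k + 1 ≤ e i), (t+1) :=
            Finset.sum_le_sum (fun i _ => min_le_right _ _)
        _ = c * (t+1) := by rw [Finset.sum_const, smul_eq_mul]
    have hB : ∑ i ∈ (Ico (t+1) n).filter (fun i => ¬ (k + 1 ≤ e i)), min (e i) (t+1) ≤ Ss :=
      Finset.sum_le_sum (fun i _ => min_le_left _ _)
    omega
  have hEGt := hEG (t+1) (by omega) (by omega)
  have hSLt : ∑ i ∈ range (t+1), e i = (t+1) * e 0 := by
    rw [Finset.sum_congr rfl (fun i hi => htop i (by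
      have := Finset.mem_range.mp hi; omega))]
    simp [mul_comm]
  -- core numeric facts
  have E1 : k * e 0 = k * (k-1) + (t + 1 - k) * k + (c * k + Ss) := by omega
  have E2 : (t+1) * e 0 ≤ (t+1) * t + (c * (t+1) + Ss) := by
    calc (t+1) * e 0 = ∑ i ∈ range (t+1), e i := hSLt.symm
      _ ≤ (t+1) * ((t+1) - 1) + ∑ i ∈ Ico (t+1) n, min (e i) (t+1) := hEGt
      _ ≤ (t+1) * t + (c * (t+1) + Ss) := by
          simp only [Nat.add_sub_cancel]
          omega
  -- derive contradiction : let A := e 0 - t - c ≥ 1, then (t+1)A ≤ kA with k < t+1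
  have hE1' : k * e 0 = k * (t + c) + Ss := by
    have h1 : k * (k-1) + (t + 1 - k) * k + c * k = k * (t + c) := by
      cases k with
      | zero => omega
      | succ k' =>
        have : t + 1 - (k' + 1) = t - k' := by omega
        rw [this]
        have ht' : k' ≤ t := by omega
        simp [Nat.succ_sub_one]
        zify [ht']
        ring
    omega
  have hA : t + c + 1 ≤ e 0 := by
    by_contra hA'
    push_neg at hA'
    have : k * e 0 ≤ k * (t + c) := Nat.mul_le_mul_left _ (by omega)
    omega
  have hE1'' : Ss = k * (e 0 - (t + c)) := by
    have : k * e 0 = k * (t + c) + k * (e 0 - (t + c)) := by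
      rw [← Nat.mul_add]
      congr 1
      omega
    omega
  have hE2' : (t+1) * (e 0 - (t + c)) ≤ Ss := by
    have h1 : (t+1) * e 0 = (t+1) * (t + c) + (t+1) * (e 0 - (t + c)) := by
      rw [← Nat.mul_add]
      congr 1
      omega
    have h2 : (t+1) * t + c * (t+1) = (t+1) * (t + c) := by ring
    omega
  have hfin : k * (e 0 - (t + c)) < (t+1) * (e 0 - (t + c)) := by
    have hpos : 0 < e 0 - (t + c) := by omega
    exact (Nat.mul_lt_mul_right hpos).mpr (by omega)
  omega

lemma eg_step
    (hmono : ∀ i j : ℕ, i ≤ j → e j ≤ e i)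
    (htw : t < w) (hwn : w < n)
    (htop : ∀ i, i ≤ t → e i = e 0)
    (hew : 1 ≤ e w)
    (heven : Even (∑ i ∈ range n, e i))
    (hEG : ∀ k, 1 ≤ k → k ≤ n →
      ∑ i ∈ range k, e i ≤ k * (k - 1) + ∑ i ∈ Ico k n, min (e i) k)
    (k : ℕ) (hk1 : 1 ≤ k) (hkn : k ≤ n) :
    ∑ i ∈ range k, red t w e i ≤ k * (k - 1) + ∑ i ∈ Ico k n, min (red t w e i) k := by
  have htw' : t ≠ w := htw.ne
  have het : 1 ≤ e t := le_trans hew (hmono t w htw.le)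
  have hEGk := hEG k hk1 hkn
  have hsplit := sum_red htw' het hew (e := e) k
  rcases lt_or_ge w k with hwk | hkw
  · -- both t, w in the head; tail unchanged
    have htail : ∑ i ∈ Ico k n, min (red t w e i) k = ∑ i ∈ Ico k n, min (e i) k := by
      refine Finset.sum_congr rfl (fun i hi => ?_)
      have hi' := (Finset.mem_Ico.mp hi).1
      have : ¬ (i = t ∨ i = w) := by omega
      simp [red, this]
    rw [htail]
    have ht : t < k := lt_trans htw hwk
    simp only [if_pos ht, if_pos hwk] at hsplit
    omega
  rcases lt_or_ge t k with htk | hkt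
  · -- t in head, w in tail
    have htail := sum_min_red (e := e) (t := t) (w := w) (n := n) k
    have hT : t ∉ Ico k n := by simp [Finset.mem_Ico]; omega
    have hW : w ∈ Ico k n := by simp [Finset.mem_Ico]; omega
    simp only [if_pos htk, if_neg (by omega : ¬ w < k), if_neg hT, if_pos hW] at hsplit htail
    omega
  · -- hard case : k ≤ t
    have hSL' : ∑ i ∈ range k, red t w e i = ∑ i ∈ range k, e i := by
      simp only [if_neg (by omega : ¬ t < k), if_neg (by omega : ¬ w < k)] at hsplit
      omega
    rw [hSL']
    have hSL : ∑ i ∈ range k, e i = k * e 0 := by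
      rw [Finset.sum_congr rfl (fun i hi => htop i (by
        have := Finset.mem_range.mp hi; omega))]
      simp [mul_comm]
    have hT : t ∈ Ico k n := by simp [Finset.mem_Ico]; omega
    have hW : w ∈ Ico k n := by simp [Finset.mem_Ico]; omega
    rcases le_or_gt (e 0) k with hek | hek
    · -- e 0 ≤ k : slack-2 case
      have htail := sum_min_red (e := e) (t := t) (w := w) (n := n) k
      simp only [if_pos hT, if_pos hW] at htail
      have hSR : ∑ i ∈ Ico k n, min (e i) k = ∑ i ∈ Ico k n, e i := by
        refine Finset.sum_congr rfl (fun i _ => ?_)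
        exact min_eq_left (le_trans (hmono 0 i (Nat.zero_le i)) hek)
      have hS : ∑ i ∈ range k, e i + ∑ i ∈ Ico k n, e i = ∑ i ∈ range n, e i := by
        rw [Finset.range_eq_Ico, Finset.range_eq_Ico]
        exact Finset.sum_Ico_consecutive e (Nat.zero_le k) hkn
      have hlow : (t + 1) * e 0 + (w - t) ≤ ∑ i ∈ range n, e i := by
        have h1 : ∑ i ∈ Ico 0 (t+1), e i = (t+1) * e 0 := by
          rw [Finset.sum_congr rfl (fun i hi => htop i (by
            have := (Finset.mem_Ico.mp hi).2; omega))]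
          simp [mul_comm]
        have h2 : (w - t) ≤ ∑ i ∈ Ico (t+1) (w+1), e i := by
          calc w - t = ∑ _i ∈ Ico (t+1) (w+1), 1 := by
                rw [Finset.sum_const, Nat.card_Ico, smul_eq_mul, mul_one]; omega
            _ ≤ _ := Finset.sum_le_sum (fun i hi => by
                have := (Finset.mem_Ico.mp hi).2
                exact le_trans hew (hmono i w (by omega)))
        have h3 : ∑ i ∈ Ico (t+1) (w+1), e i ≤ ∑ i ∈ Ico (t+1) n, e i :=
          Finset.sum_le_sum_of_subset (Finset.Ico_subset_Ico (le_refl _) (by omega))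
        have h4 : ∑ i ∈ Ico 0 (t+1), e i + ∑ i ∈ Ico (t+1) n, e i = ∑ i ∈ range n, e i := by
          rw [Finset.range_eq_Ico]
          exact Finset.sum_Ico_consecutive _ (Nat.zero_le _) (by omega)
        omega
      obtain ⟨m, hm⟩ := heven
      have hprod1 : (k+1) * e 0 ≤ (t+1) * e 0 := Nat.mul_le_mul_right _ (by omega)
      have hprod2 : (k-1) * e 0 ≤ (k-1) * k := Nat.mul_le_mul_left _ hek
      have hexp1 : (k+1) * e 0 = k * e 0 + e 0 := by ring
      have hexp4 : (k-1) * e 0 + e 0 = k * e 0 := by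
        cases k with
        | zero => omega
        | succ k' => simp [Nat.succ_sub_one]; ring
      have hexp3 : (k-1) * k + k = k * k := by
        cases k with
        | zero => omega
        | succ k' => simp [Nat.succ_sub_one]; ring
      have hexp2 : k * (k-1) = (k-1) * k := Nat.mul_comm _ _
      obtain ⟨p, hp⟩ : ∃ p, (k-1) * k = 2 * p := (Nat.even_mul_succ_self (k-1)).elim
        (fun p hp => ⟨p, by
          have : (k-1) * ((k-1) + 1) = (k-1) * k := by
            congr 1; omega
          omega⟩)
      omega
    · rcases le_or_gt (k+1) (e w) with hewk | hewk
      · -- both reduced values still ≥ k : tail unchanged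
        have het0 : e t = e 0 := htop t (le_refl _)
        have htail : ∑ i ∈ Ico k n, min (red t w e i) k = ∑ i ∈ Ico k n, min (e i) k := by
          refine Finset.sum_congr rfl (fun i _ => ?_)
          by_cases h : i = t ∨ i = w
          · have hred : red t w e i = e i - 1 := by simp [red, h]
            have hei : k + 1 ≤ e i := by
              rcases h with h | h
              · rw [h]; omega
              · rw [h]; omega
            rw [hred]
            omega
          · simp [red, h]
        rw [htail]
        omega
      · -- e 0 ≥ k+1, e w ≤ k : use Claim B
        have hB := claimB hmono htw hwn htop hew hEG k hk1 hkt (by omega) (by omega)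
        -- tail drops at most 1 (only at w)
        have htail : ∑ i ∈ Ico k n, min (e i) k ≤ (∑ i ∈ Ico k n, min (red t w e i) k) + 1 := by
          have het0 : e t = e 0 := htop t (le_refl _)
          have hpt : ∀ i ∈ Ico k n, min (e i) k ≤ min (red t w e i) k + (if i = w then 1 else 0) := by
            intro i _
            by_cases h2 : i = w
            · have hred : red t w e i = e i - 1 := by simp [red, h2]
              rw [hred, if_pos h2]
              omega
            · by_cases h1 : i = t
              · have hred : red t w e i = e i - 1 := by simp [red, h1]
                have hei : k + 1 ≤ e i := by rw [h1]; omega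
                rw [hred, if_neg h2]
                omega
              · simp [red, h1, h2]
          calc ∑ i ∈ Ico k n, min (e i) k
              ≤ ∑ i ∈ Ico k n, (min (red t w e i) k + (if i = w then 1 else 0)) :=
                Finset.sum_le_sum hpt
            _ = _ := by
                rw [Finset.sum_add_distrib, Finset.sum_ite_eq' (Ico k n) w]
                simp [hW]
        omega

end EGaux

namespace EGaux2

variable {V : Type*} [Fintype V] [DecidableEq V]

lemma ncard_insert_diff {s : Set V} {a b : V} (ha : a ∈ s) (hb : b ∉ s) :
    (insert b (s \ {a})).ncard = s.ncard := by
  have hb' : b ∉ s \ {a} := fun h => hb h.1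
  rw [Set.ncard_insert_of_notMem hb' (Set.toFinite _),
    Set.ncard_diff_singleton_of_mem ha]
  have h1 : 0 < s.ncard := (Set.ncard_pos (Set.toFinite s)).mpr ⟨a, ha⟩
  omega

/-- The graph `G` plus the edge `u w`. -/
def addEdgeGraph (G : SimpleGraph V) (u w : V) (huw : u ≠ w) : SimpleGraph V where
  Adj a b := G.Adj a b ∨ (a = u ∧ b = w) ∨ (a = w ∧ b = u)
  symm := by
    refine ⟨fun a b hab => ?_⟩
    rcases hab with h | h
    · exact Or.inl h.symm
    · exact Or.inr (by tauto)
  loopless := by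
    refine ⟨fun a hab => ?_⟩
    rcases hab with h | ⟨ha, hb⟩ | ⟨ha, hb⟩
    · exact G.loopless.irrefl a h
    · exact huw (ha.symm.trans hb)
    · exact huw (hb.symm.trans ha)

lemma addEdgeGraph_ncard (G : SimpleGraph V) (u w : V) (huw : u ≠ w) (hna : ¬ G.Adj u w)
    (v : V) : ((addEdgeGraph G u w huw).neighborSet v).ncard =
      (G.neighborSet v).ncard + (if v = u ∨ v = w then 1 else 0) := by
  have huw' : w ≠ u := huw.symm
  have hna' : ¬ G.Adj w u := fun h => hna h.symm
  have hru : u = u := rfl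
  have hrw : w = w := rfl
  by_cases hvu : v = u
  · rw [hvu, if_pos (Or.inl rfl)]
    have hset : (addEdgeGraph G u w huw).neighborSet u = insert w (G.neighborSet u) := by
      ext b
      simp only [SimpleGraph.mem_neighborSet, addEdgeGraph, Set.mem_insert_iff]
      tauto
    rw [hset, Set.ncard_insert_of_notMem (show w ∉ G.neighborSet u from hna) (Set.toFinite _)]
  · by_cases hvw : v = w
    · rw [hvw, if_pos (Or.inr rfl)]
      have hset : (addEdgeGraph G u w huw).neighborSet w = insert u (G.neighborSet w) := by
        ext b
        simp only [SimpleGraph.mem_neighborSet, addEdgeGraph, Set.mem_insert_iff]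
        tauto
      rw [hset, Set.ncard_insert_of_notMem (show u ∉ G.neighborSet w from hna') (Set.toFinite _)]
    · rw [if_neg (by tauto)]
      have hset : (addEdgeGraph G u w huw).neighborSet v = G.neighborSet v := by
        ext b
        simp only [SimpleGraph.mem_neighborSet, addEdgeGraph]
        tauto
      rw [hset]
      omega

lemma addEdgeGraph_adj (G : SimpleGraph V) (u w : V) (huw : u ≠ w) :
    (addEdgeGraph G u w huw).Adj u w := Or.inr (Or.inl ⟨rfl, rfl⟩)

section Swap

variable (G : SimpleGraph V) (u w x y : V)

/-- The 2-switch graph: replace edges `uw`, `xy` by `ux`, `wy`. -/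
def swapGraph (hux : u ≠ x) (hwy : w ≠ y) : SimpleGraph V where
  Adj a b := (G.Adj a b ∧ ¬ ((a = u ∧ b = w) ∨ (a = w ∧ b = u))
      ∧ ¬ ((a = x ∧ b = y) ∨ (a = y ∧ b = x)))
    ∨ ((a = u ∧ b = x) ∨ (a = x ∧ b = u)) ∨ ((a = w ∧ b = y) ∨ (a = y ∧ b = w))
  symm := by
    refine ⟨fun a b hab => ?_⟩
    rcases hab with ⟨h, hp, hq⟩ | h
    · exact Or.inl ⟨h.symm, by tauto, by tauto⟩
    · exact Or.inr (by tauto)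
  loopless := by
    refine ⟨fun a hab => ?_⟩
    rcases hab with ⟨h, -, -⟩ | (⟨ha, hb⟩ | ⟨ha, hb⟩) | (⟨ha, hb⟩ | ⟨ha, hb⟩)
    · exact G.loopless.irrefl a h
    · exact hux (ha.symm.trans hb)
    · exact hux (hb.symm.trans ha)
    · exact hwy (ha.symm.trans hb)
    · exact hwy (hb.symm.trans ha)

variable {G u w x y}

lemma swapGraph_ncard
    (huw : u ≠ w) (hux : u ≠ x) (huy : u ≠ y) (hwx : w ≠ x) (hwy : w ≠ y) (hxy : x ≠ y)
    (h1 : G.Adj u w) (h2 : G.Adj x y) (h3 : ¬ G.Adj u x) (h4 : ¬ G.Adj w y) (v : V) :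
    ((swapGraph G u w x y hux hwy).neighborSet v).ncard = (G.neighborSet v).ncard := by
  have huw' : w ≠ u := huw.symm
  have hux' : x ≠ u := hux.symm
  have huy' : y ≠ u := huy.symm
  have hwx' : x ≠ w := hwx.symm
  have hwy' : y ≠ w := hwy.symm
  have hxy' : y ≠ x := hxy.symm
  have hru : u = u := rfl
  have hrw : w = w := rfl
  have hrx : x = x := rfl
  have hry : y = y := rfl
  by_cases hvu : v = u
  · rw [hvu]
    have hset : (swapGraph G u w x y hux hwy).neighborSet u
        = insert x (G.neighborSet u \ {w}) := by
      ext b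
      simp only [SimpleGraph.mem_neighborSet, swapGraph, Set.mem_insert_iff, Set.mem_diff,
        Set.mem_singleton_iff]
      tauto
    rw [hset, ncard_insert_diff (show w ∈ G.neighborSet u from h1)
      (show x ∉ G.neighborSet u from h3)]
  by_cases hvw : v = w
  · rw [hvw]
    have hset : (swapGraph G u w x y hux hwy).neighborSet w
        = insert y (G.neighborSet w \ {u}) := by
      ext b
      simp only [SimpleGraph.mem_neighborSet, swapGraph, Set.mem_insert_iff, Set.mem_diff,
        Set.mem_singleton_iff]
      tauto
    rw [hset, ncard_insert_diff (show u ∈ G.neighborSet w from h1.symm)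
      (show y ∉ G.neighborSet w from h4)]
  by_cases hvx : v = x
  · rw [hvx]
    have hset : (swapGraph G u w x y hux hwy).neighborSet x
        = insert u (G.neighborSet x \ {y}) := by
      ext b
      simp only [SimpleGraph.mem_neighborSet, swapGraph, Set.mem_insert_iff, Set.mem_diff,
        Set.mem_singleton_iff]
      tauto
    rw [hset, ncard_insert_diff (show y ∈ G.neighborSet x from h2)
      (show u ∉ G.neighborSet x from fun h => h3 h.symm)]
  by_cases hvy : v = y
  · rw [hvy]
    have hset : (swapGraph G u w x y hux hwy).neighborSet y
        = insert w (G.neighborSet y \ {x}) := by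
      ext b
      simp only [SimpleGraph.mem_neighborSet, swapGraph, Set.mem_insert_iff, Set.mem_diff,
        Set.mem_singleton_iff]
      tauto
    rw [hset, ncard_insert_diff (show x ∈ G.neighborSet y from h2.symm)
      (show w ∉ G.neighborSet y from fun h => h4 h.symm)]
  · have hset : (swapGraph G u w x y hux hwy).neighborSet v = G.neighborSet v := by
      ext b
      simp only [SimpleGraph.mem_neighborSet, swapGraph]
      tauto
    rw [hset]

lemma swapGraph_not_adj
    (huw : u ≠ w) (hux : u ≠ x) (huy : u ≠ y) (hwx : w ≠ x) (hwy : w ≠ y) :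
    ¬ (swapGraph G u w x y hux hwy).Adj u w := by
  rintro (⟨-, hp, -⟩ | (⟨-, hb⟩ | ⟨ha, -⟩) | (⟨ha, -⟩ | ⟨ha, -⟩))
  · exact hp (Or.inl ⟨rfl, rfl⟩)
  · exact hwx hb
  · exact hux ha
  · exact huw ha
  · exact huy ha

end Swap

end EGaux2

namespace EGmain

/-- extend a `Fin n` sequence to `ℕ` by zero -/
def toSeq (n : ℕ) (d : Fin n → ℕ) : ℕ → ℕ := fun i => if h : i < n then d ⟨i, h⟩ else 0

lemma toSeq_val {n : ℕ} (d : Fin n → ℕ) (i : Fin n) : toSeq n d i.val = d i := dif_pos i.isLt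

lemma sum_head {n : ℕ} (d : Fin n → ℕ) (k : ℕ) (hk : k ≤ n) :
    ∑ i : Fin n, (if (i : ℕ) < k then d i else 0) = ∑ i ∈ range k, toSeq n d i := by
  have h1 : ∑ i : Fin n, (if (i : ℕ) < k then d i else 0)
      = ∑ i : Fin n, (fun j => if j < k then toSeq n d j else 0) i.val :=
    Finset.sum_congr rfl (fun i _ => by simp only [toSeq_val])
  rw [h1, Fin.sum_univ_eq_sum_range (fun j => if j < k then toSeq n d j else 0) n,
    ← Finset.sum_filter]
  congr 1
  ext j
  simp only [Finset.mem_filter, Finset.mem_range]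
  omega

lemma sum_tail {n : ℕ} (d : Fin n → ℕ) (k : ℕ) :
    ∑ i : Fin n, (if k ≤ (i : ℕ) then min (d i) k else 0)
      = ∑ i ∈ Ico k n, min (toSeq n d i) k := by
  have h1 : ∑ i : Fin n, (if k ≤ (i : ℕ) then min (d i) k else 0)
      = ∑ i : Fin n, (fun j => if k ≤ j then min (toSeq n d j) k else 0) i.val :=
    Finset.sum_congr rfl (fun i _ => by simp only [toSeq_val])
  rw [h1, Fin.sum_univ_eq_sum_range (fun j => if k ≤ j then min (toSeq n d j) k else 0) n,
    ← Finset.sum_filter]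
  congr 1
  ext j
  simp only [Finset.mem_filter, Finset.mem_range, Finset.mem_Ico]
  omega

lemma main : ∀ (S n : ℕ) (d : Fin n → ℕ), (∑ i, d i) = S →
    (∀ i j : Fin n, i ≤ j → d j ≤ d i) →
    Even S →
    (∀ k : ℕ, 1 ≤ k → k ≤ n →
      ∑ i : Fin n, (if (i : ℕ) < k then d i else 0) ≤
        k * (k - 1) + ∑ i : Fin n, (if k ≤ (i : ℕ) then min (d i) k else 0)) →
    ∃ G : SimpleGraph (Fin n), ∀ i, (G.neighborSet i).ncard = d i := by
  intro S
  induction S using Nat.strong_induction_on with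
  | _ S IH =>
  intro n d hsum hmono heven hEG
  classical
  by_cases hS0 : S = 0
  · refine ⟨⊥, fun i => ?_⟩
    have hdi : d i = 0 := by
      have := Finset.sum_eq_zero_iff.mp (hsum.trans hS0) i (Finset.mem_univ i)
      exact this
    have hbot : (⊥ : SimpleGraph (Fin n)).neighborSet i = ∅ := by
      ext b; simp
    simp [hbot, hdi]
  -- nontrivial case
  set e := toSeq n d with he
  have hemono : ∀ i j : ℕ, i ≤ j → e j ≤ e i := by
    intro i j hij
    by_cases hj : j < n
    · have hi : i < n := lt_of_le_of_lt hij hj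
      simpa [he, toSeq, hi, hj] using hmono ⟨i, hi⟩ ⟨j, hj⟩ (by simpa [Fin.le_def])
    · simp [he, toSeq, hj]
  have he0 : ∀ i, n ≤ i → e i = 0 := fun i hi => by simp [he, toSeq]; omega
  have hSn : ∑ i ∈ range n, e i = S := by
    rw [← sum_head d n (le_refl n), ← hsum]
    exact Finset.sum_congr rfl (fun i _ => by simp [i.isLt])
  have hEGe : ∀ k, 1 ≤ k → k ≤ n →
      ∑ i ∈ range k, e i ≤ k * (k - 1) + ∑ i ∈ Ico k n, min (e i) k := by
    intro k hk1 hkn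
    have := hEG k hk1 hkn
    rwa [sum_head d k hkn, sum_tail d k] at this
  -- there is a positive entry
  have hpos : ∃ i : Fin n, 1 ≤ d i := by
    by_contra hc
    push_neg at hc
    refine hS0 ?_
    rw [← hsum]
    exact Finset.sum_eq_zero (fun i _ => by have := hc i; omega)
  obtain ⟨i0, hi0⟩ := hpos
  have hn1 : 1 ≤ n := lt_of_le_of_lt (Nat.zero_le _) i0.isLt
  -- w' : last positive index
  set w' := Nat.findGreatest (fun i => 1 ≤ e i) n with hw'
  have hew' : 1 ≤ e w' := by
    have h : (fun i => 1 ≤ e i) (Nat.findGreatest (fun i => 1 ≤ e i) n) :=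
      Nat.findGreatest_spec (P := fun i => 1 ≤ e i) (m := (i0 : ℕ)) i0.isLt.le
        (show 1 ≤ e (i0 : ℕ) by rw [he, toSeq_val]; exact hi0)
    rw [hw']
    exact h
  have hw'n : w' < n := by
    rcases lt_or_eq_of_le (Nat.findGreatest_le (P := fun i => 1 ≤ e i) n) with h | h
    · exact h
    · exfalso; rw [← hw'] at h; rw [h] at hew'; have := he0 n (le_refl n); omega
  have hzero : ∀ i, w' < i → e i = 0 := by
    intro i hi
    by_cases hin : i ≤ n
    · have := Nat.findGreatest_is_greatest (P := fun i => 1 ≤ e i)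
        (show Nat.findGreatest (fun i => 1 ≤ e i) n < i by rw [← hw']; exact hi) hin
      omega
    · exact he0 i (by omega)
  have he00 : 1 ≤ e 0 := le_trans hew' (hemono 0 w' (Nat.zero_le _))
  -- e 0 ≤ w'
  have hD : e 0 ≤ w' := by
    have h1 := hEGe 1 (le_refl 1) hn1
    simp only [Finset.sum_range_one, one_mul] at h1
    have h2 : ∑ i ∈ Ico 1 n, min (e i) 1 ≤ w' := by
      calc ∑ i ∈ Ico 1 n, min (e i) 1
          = ∑ i ∈ (Ico 1 n).filter (fun i => 1 ≤ e i), min (e i) 1 := by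
            rw [Finset.sum_filter_of_ne]
            intro i _ hne
            by_contra hc
            push_neg at hc
            simp [Nat.lt_one_iff.mp hc] at hne
        _ ≤ ∑ _i ∈ (Ico 1 n).filter (fun i => 1 ≤ e i), 1 :=
            Finset.sum_le_sum (fun i _ => min_le_right _ _)
        _ = ((Ico 1 n).filter (fun i => 1 ≤ e i)).card := by
            rw [Finset.sum_const, smul_eq_mul, mul_one]
        _ ≤ (Ico 1 (w'+1)).card := by
            apply Finset.card_le_card
            intro i hi
            simp only [Finset.mem_filter, Finset.mem_Ico] at hi ⊢
            refine ⟨hi.1.1, ?_⟩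
            by_contra hc
            have := hzero i (by omega)
            omega
        _ = w' := by rw [Nat.card_Ico]; omega
    omega
  -- w' ≥ 1
  have hw'1 : 1 ≤ w' := by
    by_contra hc
    push_neg at hc
    omega
  -- t' : last index of initial block, below w'
  set t' := Nat.findGreatest (fun i => i < w' ∧ e i = e 0) n with ht'
  have ht'spec : t' < w' ∧ e t' = e 0 := by
    have h : (fun i => i < w' ∧ e i = e 0) (Nat.findGreatest (fun i => i < w' ∧ e i = e 0) n) :=
      Nat.findGreatest_spec (P := fun i => i < w' ∧ e i = e 0) (m := 0) (Nat.zero_le n) ⟨hw'1, rfl⟩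
    rw [ht']
    exact h
  have ht'max : ∀ j, t' < j → j ≤ n → ¬ (j < w' ∧ e j = e 0) := by
    intro j hj hjn
    exact Nat.findGreatest_is_greatest (P := fun i => i < w' ∧ e i = e 0)
      (show Nat.findGreatest (fun i => i < w' ∧ e i = e 0) n < j by rw [← ht']; exact hj) hjn
  have htop : ∀ i, i ≤ t' → e i = e 0 := by
    intro i hi
    have h1 := hemono 0 i (Nat.zero_le i)
    have h2 := hemono i t' hi
    omega
  have ht'w : t' < w' := ht'spec.1
  have ht'n : t' < n := lt_trans ht'w hw'n
  set tF : Fin n := ⟨t', ht'n⟩ with htF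
  set wF : Fin n := ⟨w', hw'n⟩ with hwF
  have htFwF : tF ≠ wF := by
    simp only [htF, hwF, Ne, Fin.mk.injEq]
    omega
  -- the reduced sequence
  set d' : Fin n → ℕ := fun i => if (i : ℕ) = t' ∨ (i : ℕ) = w' then d i - 1 else d i with hd'
  have hd'tF : d' tF = d tF - 1 := by simp [hd', htF]
  have hd'wF : d' wF = d wF - 1 := by simp [hd', hwF]
  have hd'other : ∀ v : Fin n, v ≠ tF → v ≠ wF → d' v = d v := by
    intro v h1 h2
    have : ¬ ((v : ℕ) = t' ∨ (v : ℕ) = w') := by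
      rintro (h | h)
      · exact h1 (Fin.ext h)
      · exact h2 (Fin.ext h)
    simp [hd', this]
  have hdtF : d tF = e 0 := by
    have : e t' = e 0 := ht'spec.2
    rwa [show e t' = d tF from by simp [he, toSeq, ht'n, htF]] at this
  have hdwF : d wF = e w' := by simp [he, toSeq, hw'n, hwF]
  have hred : ∀ i : ℕ, toSeq n d' i = EGaux.red t' w' e i := by
    intro i
    by_cases hi : i < n
    · simp only [toSeq, dif_pos hi, EGaux.red, hd']
      by_cases h : i = t' ∨ i = w' <;> simp [h, he, toSeq, hi]
    · have h1 : e i = 0 := he0 i (by omega)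
      simp only [toSeq, dif_neg hi, EGaux.red]
      by_cases h : i = t' ∨ i = w' <;> simp [h, h1]
  -- sum of d'
  have hsum' : ∑ i, d i = (∑ i, d' i) + 2 := by
    have hpt : ∀ i : Fin n, d i = d' i + ((if i = tF then 1 else 0) + (if i = wF then 1 else 0)) := by
      intro i
      by_cases h1 : i = tF
      · rw [h1, hd'tF, if_pos rfl, if_neg (by rw [← h1] at htFwF; exact h1 ▸ htFwF)]
        have : 1 ≤ d tF := by rw [hdtF]; exact he00
        omega
      · by_cases h2 : i = wF
        · rw [h2, hd'wF, if_neg (show ¬ wF = tF from fun hc => htFwF hc.symm), if_pos rfl]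
          have : 1 ≤ d wF := by rw [hdwF]; exact hew'
          omega
        · rw [hd'other i h1 h2, if_neg h1, if_neg h2]
          omega
    calc ∑ i, d i = ∑ i, (d' i + ((if i = tF then 1 else 0) + (if i = wF then 1 else 0))) :=
          Finset.sum_congr rfl (fun i _ => hpt i)
      _ = _ := by
          rw [Finset.sum_add_distrib, Finset.sum_add_distrib, Finset.sum_ite_eq' Finset.univ tF,
            Finset.sum_ite_eq' Finset.univ wF]
          simp
  have hS2 : 2 ≤ S := by
    obtain ⟨c, hc⟩ := heven
    omega
  -- d' is antitone
  have hmono' : ∀ i j : Fin n, i ≤ j → d' j ≤ d' i := by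
    intro i j hij
    have hij' : (i : ℕ) ≤ (j : ℕ) := hij
    have hdd : d j ≤ d i := hmono i j hij
    by_cases hcj : (j : ℕ) = t' ∨ (j : ℕ) = w'
    · -- d' j = d j - 1 ≤ d i - anything
      have : d' j = d j - 1 := by simp [hd', hcj]
      rw [this]
      by_cases hci : (i : ℕ) = t' ∨ (i : ℕ) = w'
      · have : d' i = d i - 1 := by simp [hd', hci]
        omega
      · have : d' i = d i := by simp [hd', hci]
        omega
    · have hj' : d' j = d j := by simp [hd', hcj]
      rw [hj']
      by_cases hci : (i : ℕ) = t' ∨ (i : ℕ) = w'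
      · -- hard case: need d j ≤ d i - 1, i.e. d j < d i
        have hine : (i : ℕ) ≠ (j : ℕ) := by
          intro hc
          exact hcj (by omega)
        have hej : e (j : ℕ) = d j := by simp [he, toSeq, j.isLt]
        have hei : e (i : ℕ) = d i := by simp [he, toSeq, i.isLt]
        rcases hci with hci | hci
        · -- i = t', j > t'
          have hjt : t' < (j : ℕ) := by omega
          have : d' i = d i - 1 := by simp [hd', hci]
          rw [this]
          have hdi0 : d i = e 0 := by rw [← hei, hci]; exact ht'spec.2
          by_cases hjw : (j : ℕ) < w'
          · have := ht'max (j : ℕ) hjt (le_of_lt j.isLt)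
            have hejne : e (j : ℕ) ≠ e 0 := by tauto
            have := hemono 0 (j : ℕ) (Nat.zero_le _)
            omega
          · have hjww : (j : ℕ) ≠ w' := by
              intro hc
              exact hcj (Or.inr hc)
            have hzj : e (j : ℕ) = 0 := hzero _ (by omega)
            omega
        · -- i = w', j > w'
          have : d' i = d i - 1 := by simp [hd', hci]
          rw [this]
          have hzj : e (j : ℕ) = 0 := hzero _ (by omega)
          have : 1 ≤ e (i : ℕ) := by rw [hci]; exact hew'
          omega
      · have : d' i = d i := by simp [hd', hci]
        omega
  -- EG for d'
  have hEG' : ∀ k : ℕ, 1 ≤ k → k ≤ n →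
      ∑ i : Fin n, (if (i : ℕ) < k then d' i else 0) ≤
        k * (k - 1) + ∑ i : Fin n, (if k ≤ (i : ℕ) then min (d' i) k else 0) := by
    intro k hk1 hkn
    rw [sum_head d' k hkn, sum_tail d' k]
    have h1 : ∑ i ∈ range k, toSeq n d' i = ∑ i ∈ range k, EGaux.red t' w' e i :=
      Finset.sum_congr rfl (fun i _ => hred i)
    have h2 : ∑ i ∈ Ico k n, min (toSeq n d' i) k = ∑ i ∈ Ico k n, min (EGaux.red t' w' e i) k :=
      Finset.sum_congr rfl (fun i _ => by rw [hred i])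
    rw [h1, h2]
    exact EGaux.eg_step hemono ht'w hw'n htop hew' (hSn ▸ heven) hEGe k hk1 hkn
  -- apply induction hypothesis
  have heven' : Even (S - 2) := by
    obtain ⟨c, hc⟩ := heven
    exact ⟨c - 1, by omega⟩
  have hsum'2 : ∑ i, d' i = S - 2 := by omega
  obtain ⟨G', hG'⟩ := IH (S - 2) (by omega) n d' hsum'2 hmono' heven' hEG'
  -- degrees of G'
  have hdegtF : (G'.neighborSet tF).ncard = e 0 - 1 := by rw [hG' tF, hd'tF, hdtF]
  have hdegwF : (G'.neighborSet wF).ncard = e w' - 1 := by rw [hG' wF, hd'wF, hdwF]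
  -- we produce a graph with the degrees of d' but without the edge tF wF
  have key : ∃ H : SimpleGraph (Fin n),
      (∀ v, (H.neighborSet v).ncard = d' v) ∧ ¬ H.Adj tF wF := by
    by_cases hadj : G'.Adj tF wF
    · -- need a 2-switch
      -- find x
      have hx : ∃ x : Fin n, (x : ℕ) < w' ∧ x ≠ tF ∧ ¬ G'.Adj tF x := by
        by_contra hc
        push_neg at hc
        have hsub : insert wF ({z : Fin n | z < wF} \ {tF}) ⊆ G'.neighborSet tF := by
          rintro z (rfl | ⟨hz1, hz2⟩)
          · exact hadj
          · exact hc z (by simpa [Fin.lt_def, hwF] using hz1) (by simpa using hz2)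
        have hcard : (insert wF ({z : Fin n | z < wF} \ {tF})).ncard = w' := by
          rw [EGaux2.ncard_insert_diff (a := tF) (b := wF)
            (by simp [Fin.lt_def, htF, hwF]; omega) (by simp)]
          have : ({z : Fin n | z < wF} : Set (Fin n)) = ↑(Finset.Iio wF) := by
            ext z; simp
          rw [this, Set.ncard_coe_finset, Fin.card_Iio]
        have hle : w' ≤ e 0 - 1 := by
          rw [← hcard, ← hdegtF]
          exact Set.ncard_le_ncard hsub (Set.toFinite _)
        omega
      obtain ⟨x, hxw, hxt, hxa⟩ := hx
      have hxwF : x ≠ wF := by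
        intro hc
        rw [hc] at hxw
        simp [hwF] at hxw
      have hdegx : e w' ≤ (G'.neighborSet x).ncard := by
        rw [hG' x, hd'other x hxt hxwF]
        have : e (x : ℕ) = d x := by simp [he, toSeq, x.isLt]
        have h2 := hemono (x : ℕ) w' (le_of_lt hxw)
        omega
      -- find y
      have hy : ∃ y : Fin n, G'.Adj x y ∧ ¬ G'.Adj wF y ∧ y ≠ wF := by
        by_contra hc
        push_neg at hc
        have hsub : G'.neighborSet x ⊆ insert wF (G'.neighborSet wF) := by
          intro z hz
          rcases eq_or_ne z wF with rfl | hzw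
          · exact Set.mem_insert _ _
          · refine Set.mem_insert_of_mem _ ?_
            by_contra hna
            exact hzw (hc z hz hna)
        have hcard : (insert wF (G'.neighborSet wF)).ncard = e w' := by
          rw [Set.ncard_insert_of_notMem (by simp) (Set.toFinite _), hdegwF]
          omega
        have heq : G'.neighborSet x = insert wF (G'.neighborSet wF) :=
          Set.eq_of_subset_of_ncard_le hsub (by omega) (Set.toFinite _)
        have htFmem : tF ∈ G'.neighborSet x := by
          rw [heq]
          exact Set.mem_insert_of_mem _ hadj.symm
        exact hxa htFmem.symm
      obtain ⟨y, hy1, hy2, hy3⟩ := hy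
      -- distinctness
      have hxy : x ≠ y := G'.ne_of_adj hy1
      have htFy : tF ≠ y := by
        intro hc
        exact hxa (hc ▸ hy1.symm)
      have hwFx : wF ≠ x := Ne.symm hxwF
      have htFx : tF ≠ x := Ne.symm (Ne.symm hxt).symm
      refine ⟨EGaux2.swapGraph G' tF wF x y htFx (Ne.symm hy3), fun v =>
        (EGaux2.swapGraph_ncard htFwF htFx htFy hwFx (Ne.symm hy3) hxy hadj hy1
          (fun h => hxa h) hy2 v).trans (hG' v), ?_⟩
      exact EGaux2.swapGraph_not_adj htFwF htFx htFy hwFx (Ne.symm hy3)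
    · exact ⟨G', hG', hadj⟩
  obtain ⟨H, hH, hHna⟩ := key
  refine ⟨EGaux2.addEdgeGraph H tF wF htFwF, fun v => ?_⟩
  rw [EGaux2.addEdgeGraph_ncard H tF wF htFwF hHna v, hH v]
  by_cases h1 : v = tF
  · rw [if_pos (Or.inl h1), h1, hd'tF]
    have : 1 ≤ d tF := by rw [hdtF]; exact he00
    omega
  · by_cases h2 : v = wF
    · rw [if_pos (Or.inr h2), h2, hd'wF]
      have : 1 ≤ d wF := by rw [hdwF]; exact hew'
      omega
    · rw [if_neg (by tauto), hd'other v h1 h2]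
      omega

end EGmain


/-- Erdős–Gallai (sufficiency): a nonincreasing sequence `d₁ ≥ … ≥ d_n` of non-negative
integers with even sum satisfying the Erdős–Gallai inequalities is the degree sequence of a
simple graph on `n` vertices. -/
theorem erdos_gallai_sufficiency (n : ℕ) (d : Fin n → ℕ)
    (hmono : ∀ i j : Fin n, i ≤ j → d j ≤ d i)
    (heven : Even (∑ i, d i))
    (hEG : ∀ k : ℕ, 1 ≤ k → k ≤ n →
      ∑ i : Fin n, (if (i : ℕ) < k then d i else 0) ≤
        k * (k - 1) + ∑ i : Fin n, (if k ≤ (i : ℕ) then min (d i) k else 0)) :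
    ∃ G : SimpleGraph (Fin n), ∀ i, (G.neighborSet i).ncard = d i := by
  exact EGmain.main (∑ i, d i) n d rfl hmono heven hEG
end

section
/- Let G be a graph, I an independent set in G, and suppose every vertex v outside I with |N(v) ∩ I| = c ≤ a−1 satisfies: the subgraph of G induced by {u ∉ I : N(u) ∩ I = C} ∪ C has independence number at most |C|, where C = N(v) ∩ I. Then for any independent set I* of G, the number of vertices of I* lying in I or having at most a−1 neighbors in I is at most ∑_{c=1}^{a-1} c·(|I| choose c), counting over all subsets C ⊆ I with 1 ≤ |C| ≤ a−1. -/
/-- Let `I` be a maximal independent set in `G` such that for every vertex `v ∉ I` with at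
most `a−1` neighbors in `I`, the subgraph induced by `V_C ∪ C` (with `C = N(v) ∩ I`) has
independence number at most `|C|`. Then, for any independent set `I*`, the number of vertices
of `I*` lying in `I` or having at most `a−1` neighbors in `I` is at most
`∑_{c=1}^{a−1} c·(|I| choose c)`. -/
theorem indep_V1_bound {V : Type*} [Fintype V] [DecidableEq V]
    (G : SimpleGraph V) [DecidableRel G.Adj] (a : ℕ) (ha : 2 ≤ a)
    (I : Finset V) (hI : (I : Set V).Pairwise fun u v => ¬G.Adj u v)
    (hmax : ∀ v ∉ I, ∃ u ∈ I, G.Adj v u)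
    (hV : ∀ v ∉ I, (G.neighborFinset v ∩ I).card ≤ a - 1 →
      ∀ s : Finset V,
        (∀ u ∈ s, (u ∉ I ∧ G.neighborFinset u ∩ I = G.neighborFinset v ∩ I) ∨
          u ∈ G.neighborFinset v ∩ I) →
        ((s : Set V).Pairwise fun x y => ¬G.Adj x y) →
        s.card ≤ (G.neighborFinset v ∩ I).card)
    (Istar : Finset V) (hIstar : (Istar : Set V).Pairwise fun u v => ¬G.Adj u v) :
    (Istar.filter fun v => v ∈ I ∨ (G.neighborFinset v ∩ I).card ≤ a - 1).card ≤
      ∑ c ∈ Finset.Icc 1 (a - 1), c * I.card.choose c := by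
  classical
  set S := Istar.filter fun v => v ∈ I ∨ (G.neighborFinset v ∩ I).card ≤ a - 1 with hS
  set f : V → Finset V := fun v => if v ∈ I then {v} else G.neighborFinset v ∩ I with hf
  set T : Finset (Finset V) :=
    (Finset.Icc 1 (a - 1)).biUnion (fun c => Finset.powersetCard c I) with hT
  have hmemT : ∀ C : Finset V, C ∈ T ↔ (C ⊆ I ∧ 1 ≤ C.card ∧ C.card ≤ a - 1) := by
    intro C
    simp only [hT, Finset.mem_biUnion, Finset.mem_Icc, Finset.mem_powersetCard]
    constructor
    · rintro ⟨c, ⟨h1, h2⟩, hsub, hc⟩; exact ⟨hsub, hc ▸ h1, hc ▸ h2⟩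
    · rintro ⟨hsub, h1, h2⟩; exact ⟨C.card, ⟨h1, h2⟩, hsub, rfl⟩
  have hmap : ∀ v ∈ S, f v ∈ T := by
    intro v hv
    rw [hS, Finset.mem_filter] at hv
    obtain ⟨hvI, hor⟩ := hv
    rw [hmemT]
    by_cases h : v ∈ I
    · simp only [hf, if_pos h]
      refine ⟨Finset.singleton_subset_iff.2 h, by simp, ?_⟩
      simp only [Finset.card_singleton]; omega
    · simp only [hf, if_neg h]
      obtain ⟨u, huI, hadj⟩ := hmax v h
      refine ⟨Finset.inter_subset_right, ?_, ?_⟩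
      · exact Finset.card_pos.2 ⟨u, Finset.mem_inter.2 ⟨(G.mem_neighborFinset v u).2 hadj, huI⟩⟩
      · exact hor.resolve_left h
  have hcard := Finset.card_eq_sum_card_fiberwise hmap
  rw [hcard]
  have hfiber : ∀ C ∈ T, (S.filter fun v => f v = C).card ≤ C.card := by
    intro C hC
    rw [hmemT] at hC
    obtain ⟨hCI, hC1, hC2⟩ := hC
    set F := S.filter fun v => f v = C with hF
    have hFsub : F ⊆ Istar := fun x hx =>
      Finset.mem_of_mem_filter x (Finset.mem_of_mem_filter x hx)
    have hFpw : (F : Set V).Pairwise fun x y => ¬G.Adj x y :=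
      Set.Pairwise.mono (by exact_mod_cast hFsub) hIstar
    by_cases hex : ∃ v ∈ F, v ∉ I
    · obtain ⟨v, hvF, hvI⟩ := hex
      have hfv : G.neighborFinset v ∩ I = C := by
        have := (Finset.mem_filter.1 hvF).2
        simpa only [hf, if_neg hvI] using this
      have := hV v hvI (by rw [hfv]; exact hC2) F ?_ hFpw
      · rwa [hfv] at this
      · intro u huF
        have hfu := (Finset.mem_filter.1 huF).2
        by_cases h : u ∈ I
        · right
          simp only [hf, if_pos h] at hfu
          rw [hfv, ← hfu]
          exact Finset.mem_singleton_self u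
        · left
          simp only [hf, if_neg h] at hfu
          exact ⟨h, by rw [hfu, hfv]⟩
    · push_neg at hex
      rcases Finset.eq_empty_or_nonempty F with h | ⟨v, hvF⟩
      · simp [h]
      · have hvI := hex v hvF
        have hfv : ({v} : Finset V) = C := by
          have := (Finset.mem_filter.1 hvF).2
          simpa only [hf, if_pos hvI] using this
        have : F ⊆ {v} := by
          intro u huF
          have huI := hex u huF
          have hfu := (Finset.mem_filter.1 huF).2
          simp only [hf, if_pos huI] at hfu
          exact Finset.mem_singleton.2 (Finset.singleton_injective (hfu.trans hfv.symm))
        calc F.card ≤ ({v} : Finset V).card := Finset.card_le_card this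
          _ = C.card := by rw [hfv]
  calc ∑ C ∈ T, (S.filter fun v => f v = C).card ≤ ∑ C ∈ T, C.card :=
        Finset.sum_le_sum hfiber
    _ = ∑ c ∈ Finset.Icc 1 (a - 1), c * I.card.choose c := by
        rw [hT, Finset.sum_biUnion]
        · refine Finset.sum_congr rfl fun c _ => ?_
          rw [Finset.sum_congr rfl fun C hC => (Finset.mem_powersetCard.1 hC).2,
            Finset.sum_const, smul_eq_mul, Finset.card_powersetCard, mul_comm]
        · intro x hx y hy hxy
          refine Finset.disjoint_left.2 fun C hCx hCy => hxy ?_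
          rw [← (Finset.mem_powersetCard.1 hCx).2, ← (Finset.mem_powersetCard.1 hCy).2]
end
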